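/- Let A₁, A₂ be symmetric positive definite matrices of sizes n₁, n₂ and H₁ (m×n₁), H₂ (m×n₂) with [H₁, H₂] surjective. If λ solves (H₁A₁⁻¹H₁ᵀ + H₂A₂⁻¹H₂ᵀ) λ = H₁A₁⁻¹f₁ + H₂A₂⁻¹f₂ and we set x₁ = A₁⁻¹(f₁ − H₁ᵀλ), x₂ = A₂⁻¹(f₂ − H₂ᵀλ), then (x₁, x₂, λ) solves the coupled system A₁x₁ + H₁ᵀλ = f₁, A₂x₂ + H₂ᵀλ = f₂, H₁x₁ + H₂x₂ = 0, and this solution is unique. -/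

import Mathlib

open Matrix

theorem stmt_15 {n₁ n₂ m : Type*} [Fintype n₁] [Fintype n₂] [Fintype m]
    [DecidableEq n₁] [DecidableEq n₂] [DecidableEq m]
    (A₁ : Matrix n₁ n₁ ℝ) (A₂ : Matrix n₂ n₂ ℝ)
    (H₁ : Matrix m n₁ ℝ) (H₂ : Matrix m n₂ ℝ)
    (hA₁ : A₁.PosDef) (hA₂ : A₂.PosDef)
    (hH : Function.Surjective (Matrix.fromCols H₁ H₂).mulVec)
    (f₁ : n₁ → ℝ) (f₂ : n₂ → ℝ) (lam : m → ℝ)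
    (hlam : (H₁ * A₁⁻¹ * H₁ᵀ + H₂ * A₂⁻¹ * H₂ᵀ).mulVec lam =
      H₁.mulVec (A₁⁻¹.mulVec f₁) + H₂.mulVec (A₂⁻¹.mulVec f₂))
    (x₁ : n₁ → ℝ) (x₂ : n₂ → ℝ)
    (hx₁ : x₁ = A₁⁻¹.mulVec (f₁ - H₁ᵀ.mulVec lam))
    (hx₂ : x₂ = A₂⁻¹.mulVec (f₂ - H₂ᵀ.mulVec lam)) :
    (A₁.mulVec x₁ + H₁ᵀ.mulVec lam = f₁ ∧
     A₂.mulVec x₂ + H₂ᵀ.mulVec lam = f₂ ∧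
     H₁.mulVec x₁ + H₂.mulVec x₂ = 0) ∧
    (∀ (y₁ : n₁ → ℝ) (y₂ : n₂ → ℝ) (μ : m → ℝ),
      A₁.mulVec y₁ + H₁ᵀ.mulVec μ = f₁ →
      A₂.mulVec y₂ + H₂ᵀ.mulVec μ = f₂ →
      H₁.mulVec y₁ + H₂.mulVec y₂ = 0 →
      y₁ = x₁ ∧ y₂ = x₂ ∧ μ = lam) := by
  have hu₁ : IsUnit A₁ := hA₁.isUnit
  have hu₂ : IsUnit A₂ := hA₂.isUnit
  have hd₁ : IsUnit A₁.det := (Matrix.isUnit_iff_isUnit_det _).mp hu₁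
  have hd₂ : IsUnit A₂.det := (Matrix.isUnit_iff_isUnit_det _).mp hu₂
  have hAi₁ : A₁ * A₁⁻¹ = 1 := Matrix.mul_nonsing_inv A₁ hd₁
  have hAi₂ : A₂ * A₂⁻¹ = 1 := Matrix.mul_nonsing_inv A₂ hd₂
  have hiA₁ : A₁⁻¹ * A₁ = 1 := Matrix.nonsing_inv_mul A₁ hd₁
  have hiA₂ : A₂⁻¹ * A₂ = 1 := Matrix.nonsing_inv_mul A₂ hd₂
  have h1 : A₁.mulVec x₁ + H₁ᵀ.mulVec lam = f₁ := by
    rw [hx₁, Matrix.mulVec_mulVec, hAi₁, Matrix.one_mulVec, sub_add_cancel]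
  have h2 : A₂.mulVec x₂ + H₂ᵀ.mulVec lam = f₂ := by
    rw [hx₂, Matrix.mulVec_mulVec, hAi₂, Matrix.one_mulVec, sub_add_cancel]
  -- key: for any μ-based solution, the Schur equation
  have key : ∀ (μ : m → ℝ),
      H₁.mulVec (A₁⁻¹.mulVec (f₁ - H₁ᵀ.mulVec μ)) +
      H₂.mulVec (A₂⁻¹.mulVec (f₂ - H₂ᵀ.mulVec μ)) =
      (H₁.mulVec (A₁⁻¹.mulVec f₁) + H₂.mulVec (A₂⁻¹.mulVec f₂)) -
      (H₁ * A₁⁻¹ * H₁ᵀ + H₂ * A₂⁻¹ * H₂ᵀ).mulVec μ := by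
    intro μ
    simp only [Matrix.mulVec_sub, Matrix.add_mulVec, ← Matrix.mulVec_mulVec]
    abel
  have h3 : H₁.mulVec x₁ + H₂.mulVec x₂ = 0 := by
    rw [hx₁, hx₂, key lam, hlam, sub_self]
  refine ⟨⟨h1, h2, h3⟩, ?_⟩
  intro y₁ y₂ μ hy₁ hy₂ hy₃
  have hy₁' : y₁ = A₁⁻¹.mulVec (f₁ - H₁ᵀ.mulVec μ) := by
    have : A₁.mulVec y₁ = f₁ - H₁ᵀ.mulVec μ := by rw [← hy₁]; abel
    rw [← this, Matrix.mulVec_mulVec, hiA₁, Matrix.one_mulVec]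
  have hy₂' : y₂ = A₂⁻¹.mulVec (f₂ - H₂ᵀ.mulVec μ) := by
    have : A₂.mulVec y₂ = f₂ - H₂ᵀ.mulVec μ := by rw [← hy₂]; abel
    rw [← this, Matrix.mulVec_mulVec, hiA₂, Matrix.one_mulVec]
  -- μ also satisfies the Schur equation
  have hμ : (H₁ * A₁⁻¹ * H₁ᵀ + H₂ * A₂⁻¹ * H₂ᵀ).mulVec μ =
      H₁.mulVec (A₁⁻¹.mulVec f₁) + H₂.mulVec (A₂⁻¹.mulVec f₂) := by
    have := hy₃
    rw [hy₁', hy₂', key μ, sub_eq_zero] at this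
    exact this.symm
  set v : m → ℝ := μ - lam with hv
  have hSv : (H₁ * A₁⁻¹ * H₁ᵀ + H₂ * A₂⁻¹ * H₂ᵀ).mulVec v = 0 := by
    rw [hv, Matrix.mulVec_sub, hμ, hlam, sub_self]
  -- quadratic form vanishes
  have hw : H₁ᵀ.mulVec v = 0 ∧ H₂ᵀ.mulVec v = 0 := by
    have hdot : v ⬝ᵥ (H₁ * A₁⁻¹ * H₁ᵀ + H₂ * A₂⁻¹ * H₂ᵀ).mulVec v = 0 := by
      rw [hSv, dotProduct_zero]
    set w₁ := H₁ᵀ.mulVec v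
    set w₂ := H₂ᵀ.mulVec v
    have hq : w₁ ⬝ᵥ A₁⁻¹.mulVec w₁ + w₂ ⬝ᵥ A₂⁻¹.mulVec w₂ = 0 := by
      rw [← hdot]
      simp only [Matrix.add_mulVec, dotProduct_add, ← Matrix.mulVec_mulVec]
      rw [Matrix.dotProduct_mulVec v H₁, Matrix.dotProduct_mulVec v H₂,
        ← Matrix.mulVec_transpose H₁ v, ← Matrix.mulVec_transpose H₂ v]
    have hq₁ : (0:ℝ) ≤ w₁ ⬝ᵥ A₁⁻¹.mulVec w₁ := by
      simpa using hA₁.inv.posSemidef.dotProduct_mulVec_nonneg w₁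
    have hq₂ : (0:ℝ) ≤ w₂ ⬝ᵥ A₂⁻¹.mulVec w₂ := by
      simpa using hA₂.inv.posSemidef.dotProduct_mulVec_nonneg w₂
    constructor
    · by_contra h
      have := hA₁.inv.dotProduct_mulVec_pos h
      simp only [star_trivial] at this
      linarith
    · by_contra h
      have := hA₂.inv.dotProduct_mulVec_pos h
      simp only [star_trivial] at this
      linarith
  have hv0 : v = 0 := by
    obtain ⟨x, hx⟩ := hH v
    have hxsplit : x = Sum.elim (x ∘ Sum.inl) (x ∘ Sum.inr) := by
      ext (i | i) <;> rfl
    have himg : H₁.mulVec (x ∘ Sum.inl) + H₂.mulVec (x ∘ Sum.inr) = v := by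
      rw [← Matrix.fromCols_mulVec_sumElim, ← hxsplit, hx]
    have hvv : v ⬝ᵥ v = 0 := by
      have h' := congrArg (fun w => v ⬝ᵥ w) himg
      rw [← h', dotProduct_add, Matrix.dotProduct_mulVec v H₁,
        Matrix.dotProduct_mulVec v H₂, ← Matrix.mulVec_transpose H₁ v,
        ← Matrix.mulVec_transpose H₂ v, hw.1, hw.2,
        zero_dotProduct, zero_dotProduct, add_zero]
    exact (dotProduct_self_eq_zero).mp hvv
  have hμlam : μ = lam := by
    have := hv0
    rw [hv, sub_eq_zero] at this
    exact this
  subst hμlam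
  refine ⟨?_, ?_, rfl⟩
  · rw [hy₁', hx₁]
  · rw [hy₂', hx₂]
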